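/- Let (Ω, F, P) be a probability space, G ⊆ F a sub-σ-algebra, a < b real numbers, m ∈ ℕ, and Y : Ω × [a,b] → ℝ^m a (F ⊗ Borel)-measurable map with E[ ∫_a^b |Y(t)|² dt ] < ∞. Define Ȳ := (1/(b−a)) · E[ ∫_a^b Y(t) dt | G ]. Then for every G-measurable η ∈ L²(Ω; ℝ^m) one has E[ ∫_a^b |Y(t) − Ȳ|² dt ] ≤ E[ ∫_a^b |Y(t) − η|² dt ]; that is, Ȳ is the best approximation of Y on [a,b] among square-integrable G-measurable random variables in the space–time L² norm. (The best-approximation property of the conditionally averaged process, used in the proofs of Corollary 3.1 and Theorem 5.3.) -/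

import Mathlib

open MeasureTheory Set

open scoped RealInnerProductSpace

set_option linter.unusedSectionVars false

section Helpers

variable {α E : Type*} [NormedAddCommGroup E] [InnerProductSpace ℝ E] [CompleteSpace E]
  {m m0 : MeasurableSpace α} {μ : Measure α}

lemma my_condexp_L2 (hm : m ≤ m0) [IsFiniteMeasure μ]
    {f : α → E} (hf : MemLp f 2 μ) :
    μ[f|m] =ᵐ[μ] (condExpL2 E ℝ hm (hf.toLp f) : α →₂[μ] E) := by
  refine (ae_eq_condExp_of_forall_setIntegral_eq hm (hf.integrable one_le_two)
    (fun s hs hμs => integrableOn_condExpL2_of_measure_ne_top hm hμs.ne _)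
    (fun s hs hμs => ?_)
    (aestronglyMeasurable_condExpL2 hm _)).symm
  rw [integral_condExpL2_eq hm (hf.toLp f) hs hμs.ne]
  exact setIntegral_congr_ae (hm s hs) (hf.coeFn_toLp.mono fun x hx _ => hx)

lemma my_memℒp_condexp (hm : m ≤ m0) [IsFiniteMeasure μ]
    {f : α → E} (hf : MemLp f 2 μ) : MemLp (μ[f|m]) 2 μ :=
  (Lp.memLp ((condExpL2 E ℝ hm (hf.toLp f) : α →₂[μ] E))).ae_eq (my_condexp_L2 hm hf).symm

lemma my_integrable_inner {f g : α → E} (hf : MemLp f 2 μ) (hg : MemLp g 2 μ) :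
    Integrable (fun x => ⟪f x, g x⟫) μ := by
  refine (L2.integrable_inner (𝕜 := ℝ) (hf.toLp f) (hg.toLp g)).congr ?_
  filter_upwards [hf.coeFn_toLp, hg.coeFn_toLp] with x h1 h2
  rw [h1, h2]

lemma my_integral_inner_condexp (hm : m ≤ m0) [IsFiniteMeasure μ]
    {f g : α → E} (hf : MemLp f 2 μ) (hg : MemLp g 2 μ)
    (hgm : AEStronglyMeasurable[m] g μ) :
    ∫ x, ⟪(μ[f|m]) x, g x⟫ ∂μ = ∫ x, ⟪f x, g x⟫ ∂μ := by
  have h1 : ∫ x, ⟪(μ[f|m]) x, g x⟫ ∂μ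
      = ⟪((condExpL2 E ℝ hm (hf.toLp f) : α →₂[μ] E)), hg.toLp g⟫ := by
    rw [L2.inner_def]
    refine integral_congr_ae ?_
    filter_upwards [my_condexp_L2 hm hf, hg.coeFn_toLp] with x hx1 hx2
    rw [hx1, hx2]
  have h2 : ⟪((condExpL2 E ℝ hm (hf.toLp f) : α →₂[μ] E)), hg.toLp g⟫
      = ⟪hf.toLp f, hg.toLp g⟫ :=
    inner_condExpL2_eq_inner_fun hm (hf.toLp f) (hg.toLp g)
      (hgm.congr hg.coeFn_toLp.symm)
  have h3 : ⟪hf.toLp f, hg.toLp g⟫ = ∫ x, ⟪f x, g x⟫ ∂μ := by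
    rw [L2.inner_def]
    refine integral_congr_ae ?_
    filter_upwards [hf.coeFn_toLp, hg.coeFn_toLp] with x hx1 hx2
    rw [hx1, hx2]
  rw [h1, h2, h3]

lemma my_sq_integral_le (μ : Measure α) [IsFiniteMeasure μ]
    {u : α → ℝ} (hu : MemLp u 2 μ) :
    (∫ x, u x ∂μ) ^ 2 ≤ (μ univ).toReal * ∫ x, u x ^ 2 ∂μ := by
  have h1 : MemLp (fun _ : α => (1 : ℝ)) 2 μ := memLp_const 1
  have hfg : ⟪h1.toLp _, hu.toLp u⟫ = ∫ x, u x ∂μ := by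
    rw [L2.inner_def]
    refine integral_congr_ae ?_
    filter_upwards [hu.coeFn_toLp, h1.coeFn_toLp] with x h2 h3
    simp only [RCLike.inner_apply, conj_trivial]
    rw [h3, h2, mul_one]
  have hf : ‖hu.toLp u‖ ^ 2 = ∫ x, u x ^ 2 ∂μ := by
    rw [← real_inner_self_eq_norm_sq, L2.inner_def]
    refine integral_congr_ae ?_
    filter_upwards [hu.coeFn_toLp] with x h2
    simp only [RCLike.inner_apply, conj_trivial]
    rw [h2, sq]
  have hg : ‖h1.toLp (fun _ : α => (1 : ℝ))‖ ^ 2 = (μ univ).toReal := by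
    rw [← real_inner_self_eq_norm_sq, L2.inner_def]
    have : ∫ x, ⟪(h1.toLp _ : α →₂[μ] ℝ) x, (h1.toLp _ : α →₂[μ] ℝ) x⟫ ∂μ
        = ∫ _x, (1 : ℝ) ∂μ := by
      refine integral_congr_ae ?_
      filter_upwards [h1.coeFn_toLp] with x h2
      simp only [RCLike.inner_apply, conj_trivial]
      rw [h2, one_mul]
    rw [this, integral_const, smul_eq_mul, mul_one, measureReal_def]
  calc (∫ x, u x ∂μ) ^ 2 = ⟪h1.toLp _, hu.toLp u⟫ ^ 2 := by rw [hfg]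
    _ ≤ (‖h1.toLp (fun _ : α => (1 : ℝ))‖ * ‖hu.toLp u‖) ^ 2 := by
        rw [← sq_abs]
        exact pow_le_pow_left₀ (abs_nonneg _) (abs_real_inner_le_norm _ _) 2
    _ = ‖h1.toLp (fun _ : α => (1 : ℝ))‖ ^ 2 * ‖hu.toLp u‖ ^ 2 := by ring
    _ = (μ univ).toReal * ∫ x, u x ^ 2 ∂μ := by rw [hf, hg]

end Helpers

/-- The conditionally averaged random variable
`Ȳ = (b-a)⁻¹ • E[ ∫_a^b Y(t) dt | G ]` is the best approximation, in the
space–time L² norm, of the process `Y` on `[a,b]` among square-integrable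
`G`-measurable random variables (used in Corollary 3.1 and Theorem 5.3). -/
theorem stmt_9
    {Ω : Type*} (G : MeasurableSpace Ω) {F : MeasurableSpace Ω} (hG : G ≤ F)
    (P : Measure Ω) [IsProbabilityMeasure P]
    {a b : ℝ} (hab : a < b) (m : ℕ)
    (Y : Ω → ℝ → EuclideanSpace ℝ (Fin m))
    (hYmeas : Measurable (fun p : Ω × ℝ => Y p.1 p.2))
    (hYint : Integrable (fun p : Ω × ℝ => ‖Y p.1 p.2‖ ^ 2)
      (P.prod (volume.restrict (Icc a b))))
    (η : Ω → EuclideanSpace ℝ (Fin m))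
    (hηmeas : StronglyMeasurable[G] η)
    (hηL2 : MemLp η 2 P) :
    (∫ ω, (∫ t in Icc a b,
        ‖Y ω t - (b - a)⁻¹ •
            (P[fun ω' => ∫ t in Icc a b, Y ω' t | G]) ω‖ ^ 2) ∂P)
      ≤ ∫ ω, (∫ t in Icc a b, ‖Y ω t - η ω‖ ^ 2) ∂P := by
  set μt : Measure ℝ := volume.restrict (Icc a b) with hμtdef
  haveI : IsFiniteMeasure μt := by
    constructor
    rw [hμtdef, Measure.restrict_apply_univ, Real.volume_Icc]
    exact ENNReal.ofReal_lt_top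
  set c : ℝ := b - a with hcdef
  have hc0 : 0 < c := sub_pos.mpr hab
  have hμtu : (μt univ).toReal = c := by
    rw [hμtdef, Measure.restrict_apply_univ, Real.volume_Icc, ENNReal.toReal_ofReal hc0.le]
  set Z : Ω → EuclideanSpace ℝ (Fin m) := fun ω => ∫ t, Y ω t ∂μt with hZdef
  have hZsm : StronglyMeasurable Z :=
    hYmeas.stronglyMeasurable.integral_prod_right' (ν := μt)
  have hae : ∀ᵐ ω ∂P, Integrable (fun t => ‖Y ω t‖ ^ 2) μt := hYint.prod_right_ae
  have hYω : ∀ ω, Measurable (fun t => Y ω t) := fun ω =>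
    hYmeas.comp measurable_prodMk_left
  have haeL2 : ∀ᵐ ω ∂P, MemLp (fun t => Y ω t) 2 μt := by
    filter_upwards [hae] with ω h
    exact (memLp_two_iff_integrable_sq_norm (hYω ω).aestronglyMeasurable).mpr h
  set g : Ω → ℝ := fun ω => ∫ t, ‖Y ω t‖ ^ 2 ∂μt with hgdef
  have hgint : Integrable g P := hYint.integral_prod_left
  -- Z is in L²
  have hZbound : ∀ᵐ ω ∂P, ‖‖Z ω‖ ^ 2‖ ≤ c * g ω := by
    filter_upwards [haeL2] with ω h
    have h1 : ‖Z ω‖ ≤ ∫ t, ‖Y ω t‖ ∂μt := norm_integral_le_integral_norm _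
    have h2 : (∫ t, ‖Y ω t‖ ∂μt) ^ 2 ≤ (μt univ).toReal * ∫ t, ‖Y ω t‖ ^ 2 ∂μt :=
      my_sq_integral_le μt h.norm
    rw [Real.norm_eq_abs, abs_of_nonneg (sq_nonneg _)]
    calc ‖Z ω‖ ^ 2 ≤ (∫ t, ‖Y ω t‖ ∂μt) ^ 2 :=
          pow_le_pow_left₀ (norm_nonneg _) h1 2
      _ ≤ c * g ω := by rw [← hμtu]; exact h2
  have hZ2 : MemLp Z 2 P :=
    (memLp_two_iff_integrable_sq_norm hZsm.aestronglyMeasurable).mpr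
      (Integrable.mono' (hgint.const_mul c)
        ((hZsm.norm.measurable.pow_const 2).aestronglyMeasurable) hZbound)
  set E0 : Ω → EuclideanSpace ℝ (Fin m) := P[Z|G] with hE0def
  have hE0sm : StronglyMeasurable[G] E0 := stronglyMeasurable_condExp
  have hE02 : MemLp E0 2 P := my_memℒp_condexp hG hZ2
  set W0 : Ω → EuclideanSpace ℝ (Fin m) := fun ω => c⁻¹ • E0 ω with hW0def
  have hW02 : MemLp W0 2 P := hE02.const_smul c⁻¹
  have hW0sm : StronglyMeasurable[G] W0 := hE0sm.const_smul c⁻¹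
  -- orthogonality
  have horth : ∀ W : Ω → EuclideanSpace ℝ (Fin m), MemLp W 2 P → StronglyMeasurable[G] W →
      ∫ ω, ⟪Z ω, W ω⟫ ∂P = c * ∫ ω, ⟪W0 ω, W ω⟫ ∂P := by
    intro W hW2 hWsm
    have h1 := my_integral_inner_condexp hG hZ2 hW2 hWsm.aestronglyMeasurable
    rw [← h1, ← integral_const_mul]
    refine integral_congr_ae (Filter.Eventually.of_forall fun ω => ?_)
    show ⟪E0 ω, W ω⟫ = c * ⟪c⁻¹ • E0 ω, W ω⟫
    rw [real_inner_smul_left, ← mul_assoc, mul_inv_cancel₀ hc0.ne', one_mul]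
  -- expansion
  have hexp : ∀ W : Ω → EuclideanSpace ℝ (Fin m), MemLp W 2 P →
      ∫ ω, ∫ t, ‖Y ω t - W ω‖ ^ 2 ∂μt ∂P
        = ∫ ω, g ω ∂P - 2 * ∫ ω, ⟪Z ω, W ω⟫ ∂P + c * ∫ ω, ‖W ω‖ ^ 2 ∂P := by
    intro W hW2
    have hWsq : Integrable (fun ω => ‖W ω‖ ^ 2) P :=
      (memLp_two_iff_integrable_sq_norm hW2.1).mp hW2
    have hZW : Integrable (fun ω => ⟪Z ω, W ω⟫) P := my_integrable_inner hZ2 hW2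
    have hptw : ∀ᵐ ω ∂P, ∫ t, ‖Y ω t - W ω‖ ^ 2 ∂μt
        = g ω - 2 * ⟪Z ω, W ω⟫ + c * ‖W ω‖ ^ 2 := by
      filter_upwards [haeL2, hae] with ω h2 hsq
      have hint1 : Integrable (fun t => Y ω t) μt := h2.integrable one_le_two
      have hinner : Integrable (fun t => ⟪Y ω t, W ω⟫) μt := hint1.inner_const _
      have hrw : (fun t => ‖Y ω t - W ω‖ ^ 2)
          = fun t => ‖Y ω t‖ ^ 2 - 2 * ⟪Y ω t, W ω⟫ + ‖W ω‖ ^ 2 :=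
        funext fun t => norm_sub_sq_real _ _
      have hIinner : ∫ t, ⟪Y ω t, W ω⟫ ∂μt = ⟪Z ω, W ω⟫ := by
        calc ∫ t, ⟪Y ω t, W ω⟫ ∂μt = ∫ t, ⟪W ω, Y ω t⟫ ∂μt :=
              integral_congr_ae (Filter.Eventually.of_forall fun t => real_inner_comm _ _)
          _ = ⟪W ω, Z ω⟫ := integral_inner hint1 (W ω)
          _ = ⟪Z ω, W ω⟫ := real_inner_comm _ _
      have i3 : Integrable (fun t => 2 * ⟪Y ω t, W ω⟫) μt := hinner.const_mul 2
      have i1 : Integrable (fun t => ‖Y ω t‖ ^ 2 - 2 * ⟪Y ω t, W ω⟫) μt := hsq.sub i3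
      rw [hrw, integral_add i1 (integrable_const _),
        integral_sub hsq i3, integral_const_mul, hIinner,
        integral_const, smul_eq_mul, measureReal_def, hμtu]
    have j3 : Integrable (fun ω => 2 * ⟪Z ω, W ω⟫) P := hZW.const_mul 2
    have j1 : Integrable (fun ω => g ω - 2 * ⟪Z ω, W ω⟫) P := hgint.sub j3
    have j2 : Integrable (fun ω => c * ‖W ω‖ ^ 2) P := hWsq.const_mul c
    rw [integral_congr_ae hptw, integral_add j1 j2,
      integral_sub hgint j3, integral_const_mul, integral_const_mul]
  -- put everything together
  have hgoal : (∫ ω, ∫ t, ‖Y ω t - W0 ω‖ ^ 2 ∂μt ∂P)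
      ≤ ∫ ω, ∫ t, ‖Y ω t - η ω‖ ^ 2 ∂μt ∂P := by
    rw [hexp W0 hW02, hexp η hηL2, horth W0 hW02 hW0sm, horth η hηL2 hηmeas]
    have hIη : Integrable (fun ω => ⟪W0 ω, η ω⟫) P := my_integrable_inner hW02 hηL2
    have hW0sq : Integrable (fun ω => ‖W0 ω‖ ^ 2) P :=
      (memLp_two_iff_integrable_sq_norm hW02.1).mp hW02
    have hηsq : Integrable (fun ω => ‖η ω‖ ^ 2) P :=
      (memLp_two_iff_integrable_sq_norm hηL2.1).mp hηL2
    have hIbb : ∫ ω, ⟪W0 ω, W0 ω⟫ ∂P = ∫ ω, ‖W0 ω‖ ^ 2 ∂P :=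
      integral_congr_ae (Filter.Eventually.of_forall fun ω => real_inner_self_eq_norm_sq _)
    have key : (0:ℝ) ≤ ∫ ω, ‖W0 ω - η ω‖ ^ 2 ∂P :=
      integral_nonneg fun ω => sq_nonneg _
    have hsplit : ∫ ω, ‖W0 ω - η ω‖ ^ 2 ∂P
        = ∫ ω, ‖W0 ω‖ ^ 2 ∂P - 2 * ∫ ω, ⟪W0 ω, η ω⟫ ∂P + ∫ ω, ‖η ω‖ ^ 2 ∂P := by
      have hrw : (fun ω => ‖W0 ω - η ω‖ ^ 2)
          = fun ω => ‖W0 ω‖ ^ 2 - 2 * ⟪W0 ω, η ω⟫ + ‖η ω‖ ^ 2 :=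
        funext fun ω => norm_sub_sq_real _ _
      have k3 : Integrable (fun ω => 2 * ⟪W0 ω, η ω⟫) P := hIη.const_mul 2
      have k1 : Integrable (fun ω => ‖W0 ω‖ ^ 2 - 2 * ⟪W0 ω, η ω⟫) P := hW0sq.sub k3
      rw [hrw, integral_add k1 hηsq, integral_sub hW0sq k3, integral_const_mul]
    rw [hIbb]
    nlinarith [mul_nonneg hc0.le key]
  exact hgoal
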